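/- For n > 2, the subgroup S_n^ε = {ε(σ)·σ : σ ∈ S_n} of the hyperoctahedral group H_n = {±1}^n ⋊ S_n is not conjugate in H_n to the natural subgroup S_n, where ε(σ) ∈ {±1}ⁿ here denotes the diagonal element (sgn(σ),…,sgn(σ)). -/

import Mathlib

/-- The hyperoctahedral group `H_n = {±1}^n ⋊ S_n`, with `S_n` permuting coordinates. -/
abbrev Hyperoctahedral (n : ℕ) :=
  (Fin n → ℤˣ) ⋊[(mulAutArrow : Equiv.Perm (Fin n) →* MulAut (Fin n → ℤˣ))] Equiv.Perm (Fin n)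


lemma mulAutArrow_apply' {n : ℕ} (π : Equiv.Perm (Fin n)) (f : Fin n → ℤˣ) (i : Fin n) :
    (mulAutArrow π f) i = f (π⁻¹ i) := rfl

/-- For `n > 2`, the subgroup `S_n^ε = {δ(sgn σ)·σ : σ ∈ S_n}` of `H_n` is not conjugate in
`H_n` to the natural subgroup `S_n`. -/
theorem snEps_not_conj_sn {n : ℕ} (hn : 2 < n) :
    ¬ ∃ h : Hyperoctahedral n,
      (fun k => h * k * h⁻¹) ''
          (Set.range fun σ : Equiv.Perm (Fin n) =>
            (⟨fun _ => Equiv.Perm.sign σ, σ⟩ : Hyperoctahedral n)) =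
        Set.range (SemidirectProduct.inr : Equiv.Perm (Fin n) →* Hyperoctahedral n) := by
  rintro ⟨h, heq⟩
  have h01 : (⟨0, by omega⟩ : Fin n) ≠ ⟨1, by omega⟩ := by
    simp [Fin.ext_iff]
  set τ : Equiv.Perm (Fin n) := Equiv.swap ⟨0, by omega⟩ ⟨1, by omega⟩ with hτ
  have h2 : h * (⟨fun _ => Equiv.Perm.sign τ, τ⟩ : Hyperoctahedral n) * h⁻¹ ∈
      Set.range (SemidirectProduct.inr : Equiv.Perm (Fin n) →* Hyperoctahedral n) := by
    rw [← heq]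
    exact ⟨_, ⟨τ, rfl⟩, rfl⟩
  obtain ⟨σ, hσ⟩ := h2
  have hleft : (h * (⟨fun _ => Equiv.Perm.sign τ, τ⟩ : Hyperoctahedral n) * h⁻¹).left = 1 := by
    rw [← hσ]; rfl
  have hsign : Equiv.Perm.sign τ = -1 := Equiv.Perm.sign_swap h01
  have hkey := congrFun hleft (h.right ⟨2, hn⟩)
  have hfix : τ⁻¹ ⟨2, hn⟩ = ⟨2, hn⟩ := by
    rw [hτ, Equiv.swap_inv]
    apply Equiv.swap_apply_of_ne_of_ne <;> simp [Fin.ext_iff]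
  simp only [SemidirectProduct.mul_left, SemidirectProduct.inv_left, SemidirectProduct.mul_right,
    Pi.mul_apply, Pi.inv_apply, mulAutArrow_apply', Equiv.symm_apply_apply, hfix,
    Equiv.apply_symm_apply, hsign] at hkey
  simp [mul_inv_rev, Equiv.Perm.mul_apply, hfix, inv_mul_cancel_left] at hkey
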